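/- For s ≥ 3, the number of maximum general position sets of P_2 □ P_s equals s(s−1)(s−2)/3. -/

import Mathlib

/-- `S` is a general position set of `G`. -/
def isGPSet {V : Type*} (G : SimpleGraph V) (S : Set V) : Prop :=
  ∀ u ∈ S, ∀ v ∈ S, ∀ w ∈ S, u ≠ v → v ≠ w → u ≠ w →
    G.dist u v ≠ G.dist u w + G.dist w v

/-- The general position number of `G`: the largest size of a general position set. -/
noncomputable def gpNum {V : Type*} (G : SimpleGraph V) : ℕ :=
  sSup {n | ∃ S : Finset V, isGPSet G ↑S ∧ S.card = n}


open SimpleGraph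

lemma pathGraph_exists_walk (n : ℕ) : ∀ (k : ℕ) (i j : Fin n), Nat.dist i.val j.val = k →
    ∃ w : (pathGraph n).Walk i j, w.length = k := by
  intro k
  induction k with
  | zero =>
    intro i j h
    have : i = j := by apply Fin.ext; simp [Nat.dist] at h; omega
    subst this; exact ⟨.nil, rfl⟩
  | succ k ih =>
    intro i j h
    rcases lt_trichotomy i.val j.val with hlt | heq | hgt
    · have hj : i.val + 1 < n := lt_of_le_of_lt hlt j.is_lt
      set i' : Fin n := ⟨i.val + 1, hj⟩ with hi'
      have hadj : (pathGraph n).Adj i i' := by rw [pathGraph_adj]; left; rfl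
      obtain ⟨w, hw⟩ := ih i' j (by simp [Nat.dist, hi'] at h ⊢; omega)
      exact ⟨.cons hadj w, by simp [hw]⟩
    · exfalso; simp [Nat.dist, heq] at h
    · set i' : Fin n := ⟨i.val - 1, by omega⟩ with hi'
      have hadj : (pathGraph n).Adj i i' := by rw [pathGraph_adj]; right; simp [hi']; omega
      obtain ⟨w, hw⟩ := ih i' j (by simp [Nat.dist, hi'] at h ⊢; omega)
      exact ⟨.cons hadj w, by simp [hw]⟩

variable {s : ℕ}

/-- abbreviation for the grid graph -/
private abbrev GG (s : ℕ) : SimpleGraph (Fin 2 × Fin s) :=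
  (SimpleGraph.pathGraph 2).boxProd (SimpleGraph.pathGraph s)

private def d2 (x y : Fin 2 × Fin s) : ℕ := Nat.dist x.1.val y.1.val + Nat.dist x.2.val y.2.val

lemma adj_d2 {x y : Fin 2 × Fin s} (h : (GG s).Adj x y) : d2 x y = 1 := by
  rcases h with ⟨h1, h2⟩ | ⟨h1, h2⟩
  · rw [pathGraph_adj] at h1
    simp [d2, h2, Nat.dist]; omega
  · rw [pathGraph_adj] at h1
    simp [d2, h2, Nat.dist]; omega

lemma walk_le (x y : Fin 2 × Fin s) (w : (GG s).Walk x y) : d2 x y ≤ w.length := by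
  induction w with
  | nil => simp [d2, Nat.dist]
  | cons h w ih =>
    rename_i a b c
    have h1 := adj_d2 h
    have tri : d2 a c ≤ d2 a b + d2 b c := by simp [d2, Nat.dist]; omega
    simp only [SimpleGraph.Walk.length_cons]
    omega

lemma dist_eq (x y : Fin 2 × Fin s) : (GG s).dist x y = d2 x y := by
  obtain ⟨x1, x2⟩ := x
  obtain ⟨y1, y2⟩ := y
  obtain ⟨w1, hw1⟩ := pathGraph_exists_walk 2 _ x1 y1 rfl
  obtain ⟨w2, hw2⟩ := pathGraph_exists_walk s _ x2 y2 rfl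
  apply le_antisymm
  · have h := SimpleGraph.dist_le ((w1.boxProdLeft (pathGraph s) x2).append
      (SimpleGraph.Walk.boxProdRight (pathGraph 2) y1 w2))
    have hl : ((w1.boxProdLeft (pathGraph s) x2).append
        (SimpleGraph.Walk.boxProdRight (pathGraph 2) y1 w2)).length = w1.length + w2.length := by
      rw [SimpleGraph.Walk.length_append]
      exact congrArg₂ (· + ·) (SimpleGraph.Walk.length_map _ w1) (SimpleGraph.Walk.length_map _ w2)
    rw [hl, hw1, hw2] at h
    simpa [d2] using h
  · obtain ⟨w, hw⟩ := SimpleGraph.Reachable.exists_walk_length_eq_dist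
      ⟨(w1.boxProdLeft (pathGraph s) x2).append
        (SimpleGraph.Walk.boxProdRight (pathGraph 2) y1 w2)⟩
    rw [← hw]
    exact walk_le _ _ w

private def Nb (a b c : ℕ) : Prop := (a ≤ b ∧ b ≤ c) ∨ (c ≤ b ∧ b ≤ a)

lemma gg_btw_iff (u w v : Fin 2 × Fin s) :
    (GG s).dist u v = (GG s).dist u w + (GG s).dist w v ↔
      Nb u.1.val w.1.val v.1.val ∧ Nb u.2.val w.2.val v.2.val := by
  rw [dist_eq, dist_eq, dist_eq]
  simp only [d2, Nat.dist, Nb]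
  omega

lemma gp_fact {S : Finset (Fin 2 × Fin s)} (h : isGPSet (GG s) ↑S)
    {u v w : Fin 2 × Fin s} (hu : u ∈ S) (hv : v ∈ S) (hw : w ∈ S)
    (h1 : u ≠ v) (h2 : v ≠ w) (h3 : u ≠ w) :
    ¬(Nb u.1.val w.1.val v.1.val ∧ Nb u.2.val w.2.val v.2.val) :=
  fun hn => h u hu v hv w hw h1 h2 h3 ((gg_btw_iff u w v).mpr hn)

lemma gp_card_le (S : Finset (Fin 2 × Fin s)) (h : isGPSet (GG s) ↑S) :
    S.card ≤ 3 := by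
  by_contra hc
  push_neg at hc
  obtain ⟨T, hTS, hT4⟩ := S.exists_subset_card_eq (by omega : 4 ≤ S.card)
  obtain ⟨p, T3, hpT3, hT3ins, hT3⟩ := Finset.card_eq_succ.mp hT4
  obtain ⟨q, r, t, hqr, hqt, hrt, hT3e⟩ := Finset.card_eq_three.mp hT3
  subst hT3e
  subst hT3ins
  have hp : p ∈ S := hTS (by simp)
  have hq : q ∈ S := hTS (by simp)
  have hr : r ∈ S := hTS (by simp)
  have ht : t ∈ S := hTS (by simp)
  have hpq : p ≠ q := by rintro rfl; simp at hpT3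
  have hpr : p ≠ r := by rintro rfl; simp at hpT3
  have hpt : p ≠ t := by rintro rfl; simp at hpT3
  have vpq : ¬(p.1.val = q.1.val ∧ p.2.val = q.2.val) :=
    fun ⟨a, b⟩ => hpq (Prod.ext (Fin.ext a) (Fin.ext b))
  have vpr : ¬(p.1.val = r.1.val ∧ p.2.val = r.2.val) :=
    fun ⟨a, b⟩ => hpr (Prod.ext (Fin.ext a) (Fin.ext b))
  have vpt : ¬(p.1.val = t.1.val ∧ p.2.val = t.2.val) :=
    fun ⟨a, b⟩ => hpt (Prod.ext (Fin.ext a) (Fin.ext b))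
  have vqr : ¬(q.1.val = r.1.val ∧ q.2.val = r.2.val) :=
    fun ⟨a, b⟩ => hqr (Prod.ext (Fin.ext a) (Fin.ext b))
  have vqt : ¬(q.1.val = t.1.val ∧ q.2.val = t.2.val) :=
    fun ⟨a, b⟩ => hqt (Prod.ext (Fin.ext a) (Fin.ext b))
  have vrt : ¬(r.1.val = t.1.val ∧ r.2.val = t.2.val) :=
    fun ⟨a, b⟩ => hrt (Prod.ext (Fin.ext a) (Fin.ext b))
  have F1 := gp_fact h hq hr hp (hqr) (hpr.symm) (hpq.symm)
  have F2 := gp_fact h hq ht hp (hqt) (hpt.symm) (hpq.symm)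
  have F3 := gp_fact h hr ht hp (hrt) (hpt.symm) (hpr.symm)
  have F4 := gp_fact h hp hr hq (hpr) (hqr.symm) (hpq)
  have F5 := gp_fact h hp ht hq (hpt) (hqt.symm) (hpq)
  have F6 := gp_fact h hr ht hq (hrt) (hqt.symm) (hqr.symm)
  have F7 := gp_fact h hp hq hr (hpq) (hqr) (hpr)
  have F8 := gp_fact h hp ht hr (hpt) (hrt.symm) (hpr)
  have F9 := gp_fact h hq ht hr (hqt) (hrt.symm) (hqr)
  have F10 := gp_fact h hp hq ht (hpq) (hqt) (hpt)
  have F11 := gp_fact h hp hr ht (hpr) (hrt) (hpt)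
  have F12 := gp_fact h hq hr ht (hqr) (hrt) (hqt)
  have rp := p.1.is_lt
  have rq := q.1.is_lt
  have rr := r.1.is_lt
  have rt := t.1.is_lt
  simp only [Nb] at F1 F2 F3 F4 F5 F6 F7 F8 F9 F10 F11 F12
  omega

-- ===== witness and gpNum = 3 =====

lemma val_add_one (a : Fin 2) : ((a + 1 : Fin 2)).val = (a.val + 1) % 2 := by
  rw [Fin.val_add]; rfl

lemma gp_explicit (a : Fin 2) (x y z : Fin s) (hxy : x < y) (hyz : y < z) :
    isGPSet (GG s) ↑({(a, x), (a + 1, y), (a, z)} : Finset (Fin 2 × Fin s)) := by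
  have ha : a.val ≤ 1 := by omega
  have ha1 := val_add_one a
  have hxy' : x.val < y.val := hxy
  have hyz' : y.val < z.val := hyz
  intro u hu v hv w hw h1 h2 h3
  simp only [Finset.coe_insert, Set.mem_insert_iff, Finset.coe_singleton,
    Set.mem_singleton_iff] at hu hv hw
  rw [Ne, gg_btw_iff]
  rcases hu with rfl | rfl | rfl <;> rcases hv with rfl | rfl | rfl <;>
    rcases hw with rfl | rfl | rfl <;>
    first
      | exact absurd rfl h1
      | exact absurd rfl h2
      | exact absurd rfl h3
      | (simp only [Nb]; omega)

lemma card_explicit (a : Fin 2) (x y z : Fin s) (hxy : x < y) (hyz : y < z) :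
    ({(a, x), (a + 1, y), (a, z)} : Finset (Fin 2 × Fin s)).card = 3 := by
  rw [Finset.card_eq_three]
  have ha : a.val ≤ 1 := by omega
  have ha1 := val_add_one a
  have hxy' : x.val < y.val := hxy
  have hyz' : y.val < z.val := hyz
  refine ⟨_, _, _, ?_, ?_, ?_, rfl⟩ <;>
    · rintro h
      rw [Prod.mk.injEq] at h
      obtain ⟨h1, h2⟩ := h
      rw [Fin.ext_iff] at h1 h2
      omega

lemma gpNum_eq (hs : 3 ≤ s) : gpNum (GG s) = 3 := by
  have hlt0 : (⟨0, by omega⟩ : Fin s) < ⟨1, by omega⟩ := by rw [Fin.mk_lt_mk]; omega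
  have hlt : (⟨1, by omega⟩ : Fin s) < ⟨2, by omega⟩ := by rw [Fin.mk_lt_mk]; omega
  have hmem : 3 ∈ {n | ∃ S : Finset (Fin 2 × Fin s), isGPSet (GG s) ↑S ∧ S.card = n} :=
    ⟨{((0:Fin 2), ⟨0, by omega⟩), ((0:Fin 2) + 1, ⟨1, by omega⟩), ((0:Fin 2), ⟨2, by omega⟩)},
      gp_explicit 0 _ _ _ hlt0 hlt, card_explicit 0 _ _ _ hlt0 hlt⟩
  apply le_antisymm
  · exact csSup_le ⟨3, hmem⟩ (fun n ⟨S, hS, hc⟩ => hc ▸ gp_card_le S hS)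
  · exact le_csSup ⟨3, fun n ⟨S, hS, hc⟩ => hc ▸ gp_card_le S hS⟩ hmem

-- ===== ordered triple extraction =====

lemma three_order {T : Finset (Fin s)} (hT : T.card = 3) :
    ∃ x y z : Fin s, x < y ∧ y < z ∧ T = {x, y, z} := by
  obtain ⟨a, b, c, hab, hac, hbc, rfl⟩ := Finset.card_eq_three.mp hT
  have E : ∀ x y z : Fin s, ({a, b, c} : Finset (Fin s)) = {x, y, z} ∨ True := fun _ _ _ => .inr trivial
  rcases hab.lt_or_gt with h1 | h1 <;> rcases hbc.lt_or_gt with h2 | h2 <;>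
    rcases hac.lt_or_gt with h3 | h3
  · exact ⟨a, b, c, h1, h2, rfl⟩
  · exact absurd h3 (not_lt.mpr (h1.trans h2).le)
  · exact ⟨a, c, b, h3, h2, by ext t; simp; tauto⟩
  · exact ⟨c, a, b, h3, h1, by ext t; simp; tauto⟩
  · exact ⟨b, a, c, h1, h3, by ext t; simp; tauto⟩
  · exact ⟨b, c, a, h2, h3, by ext t; simp; tauto⟩
  · exact absurd h3 (not_lt.mpr (h2.trans h1).le)
  · exact ⟨c, b, a, h2, h1, by ext t; simp; tauto⟩

-- ===== the parametrization =====

private def rho (a : Fin 2) (T : Finset (Fin s)) (c : Fin s) : Fin 2 :=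
  if (c : WithTop (Fin s)) = T.min ∨ (c : WithBot (Fin s)) = T.max then a else a + 1

private def Fab (a : Fin 2) (T : Finset (Fin s)) : Finset (Fin 2 × Fin s) :=
  T.image fun c => (rho a T c, c)

lemma min_triple {x y z : Fin s} (h1 : x < y) (h2 : y < z) :
    ({x, y, z} : Finset (Fin s)).min = (x : WithTop (Fin s)) := by
  apply le_antisymm
  · exact Finset.min_le (by simp)
  · apply Finset.le_min
    intro b hb
    simp at hb
    rcases hb with rfl | rfl | rfl
    · exact le_refl _
    · exact WithTop.coe_le_coe.mpr h1.le
    · exact WithTop.coe_le_coe.mpr (h1.trans h2).le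

lemma max_triple {x y z : Fin s} (h1 : x < y) (h2 : y < z) :
    ({x, y, z} : Finset (Fin s)).max = (z : WithBot (Fin s)) := by
  apply le_antisymm
  · apply Finset.max_le
    intro b hb
    simp at hb
    rcases hb with rfl | rfl | rfl
    · exact WithBot.coe_le_coe.mpr (h1.trans h2).le
    · exact WithBot.coe_le_coe.mpr h2.le
    · exact le_refl _
  · exact Finset.le_max (by simp)

lemma Fab_explicit (a : Fin 2) {x y z : Fin s} (h1 : x < y) (h2 : y < z) :
    Fab a {x, y, z} = {(a, x), (a + 1, y), (a, z)} := by
  have hmin := min_triple h1 h2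
  have hmax := max_triple h1 h2
  have hx : rho a {x, y, z} x = a := by simp [rho, hmin]
  have hz : rho a {x, y, z} z = a := by simp [rho, hmax]
  have hy : rho a {x, y, z} y = a + 1 := by
    rw [rho, if_neg]
    push_neg
    constructor
    · rw [hmin]
      exact fun h => absurd (WithTop.coe_inj.mp h) h1.ne'
    · rw [hmax]
      exact fun h => absurd (WithBot.coe_inj.mp h) h2.ne
  rw [Fab, Finset.image_insert, Finset.image_insert, Finset.image_singleton, hx, hy, hz]

-- ===== backward structure =====

lemma backward {u v w : Fin 2 × Fin s}
    (hgp : isGPSet (GG s) ↑({u, v, w} : Finset (Fin 2 × Fin s)))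
    (h1 : u ≠ v) (h2 : v ≠ w) (h3 : u ≠ w)
    (hc1 : u.2 < v.2) (hc2 : v.2 < w.2) :
    w.1 = u.1 ∧ v.1 = u.1 + 1 := by
  have hu : u ∈ ({u, v, w} : Finset (Fin 2 × Fin s)) := by simp
  have hv : v ∈ ({u, v, w} : Finset (Fin 2 × Fin s)) := by simp
  have hw : w ∈ ({u, v, w} : Finset (Fin 2 × Fin s)) := by simp
  have F := gp_fact hgp hu hw hv h3 h2.symm h1
  simp only [Nb] at F
  have hcv1 : u.2.val < v.2.val := hc1
  have hcv2 : v.2.val < w.2.val := hc2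
  have r1 := u.1.is_lt
  have r2 := v.1.is_lt
  have r3 := w.1.is_lt
  have hval := val_add_one u.1
  exact ⟨Fin.ext (by omega), Fin.ext (by omega)⟩

lemma cols_ne {u v w : Fin 2 × Fin s}
    (hgp : isGPSet (GG s) ↑({u, v, w} : Finset (Fin 2 × Fin s)))
    (h1 : u ≠ v) (h2 : v ≠ w) (h3 : u ≠ w) :
    u.2.val ≠ v.2.val ∧ v.2.val ≠ w.2.val ∧ u.2.val ≠ w.2.val := by
  have hu : u ∈ ({u, v, w} : Finset (Fin 2 × Fin s)) := by simp
  have hv : v ∈ ({u, v, w} : Finset (Fin 2 × Fin s)) := by simp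
  have hw : w ∈ ({u, v, w} : Finset (Fin 2 × Fin s)) := by simp
  have F1 := gp_fact hgp hu hw hv h3 h2.symm h1
  have F2 := gp_fact hgp hv hw hu h2 h3.symm h1.symm
  have F3 := gp_fact hgp hu hv hw h1 h2 h3
  simp only [Nb] at F1 F2 F3
  have vuv : ¬(u.1.val = v.1.val ∧ u.2.val = v.2.val) :=
    fun ⟨a, b⟩ => h1 (Prod.ext (Fin.ext a) (Fin.ext b))
  have vvw : ¬(v.1.val = w.1.val ∧ v.2.val = w.2.val) :=
    fun ⟨a, b⟩ => h2 (Prod.ext (Fin.ext a) (Fin.ext b))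
  have vuw : ¬(u.1.val = w.1.val ∧ u.2.val = w.2.val) :=
    fun ⟨a, b⟩ => h3 (Prod.ext (Fin.ext a) (Fin.ext b))
  have r1 := u.1.is_lt
  have r2 := v.1.is_lt
  have r3 := w.1.is_lt
  omega

lemma build {u v w : Fin 2 × Fin s}
    (hgp : isGPSet (GG s) ↑({u, v, w} : Finset (Fin 2 × Fin s)))
    (h1 : u ≠ v) (h2 : v ≠ w) (h3 : u ≠ w)
    (hc1 : u.2 < v.2) (hc2 : v.2 < w.2) :
    ∃ p : Fin 2 × Finset (Fin s), p.2.card = 3 ∧ Fab p.1 p.2 = {u, v, w} := by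
  obtain ⟨hw1, hv1⟩ := backward hgp h1 h2 h3 hc1 hc2
  refine ⟨(u.1, {u.2, v.2, w.2}), ?_, ?_⟩
  · rw [Finset.card_eq_three]
    exact ⟨_, _, _, hc1.ne, (hc1.trans hc2).ne, hc2.ne, rfl⟩
  · show Fab u.1 {u.2, v.2, w.2} = _
    rw [Fab_explicit u.1 hc1 hc2]
    have ev : ((u.1 + 1 : Fin 2), v.2) = v := by rw [← hv1]
    have ew : ((u.1 : Fin 2), w.2) = w := by rw [← hw1]
    rw [ev, ew, Prod.mk.eta]

lemma build' {u v w A B C : Fin 2 × Fin s}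
    (e : ({u, v, w} : Finset (Fin 2 × Fin s)) = {A, B, C})
    (hgp : isGPSet (GG s) ↑({u, v, w} : Finset (Fin 2 × Fin s)))
    (h1 : A ≠ B) (h2 : B ≠ C) (h3 : A ≠ C)
    (hc1 : A.2.val < B.2.val) (hc2 : B.2.val < C.2.val) :
    ∃ p : Fin 2 × Finset (Fin s), p.2.card = 3 ∧ Fab p.1 p.2 = {u, v, w} := by
  rw [e] at hgp ⊢
  exact build hgp h1 h2 h3 (Fin.lt_def.mpr hc1) (Fin.lt_def.mpr hc2)

lemma Fab_inj {a a' : Fin 2} {T T' : Finset (Fin s)} (hT : T.card = 3) (hT' : T'.card = 3)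
    (h : Fab a T = Fab a' T') : a = a' ∧ T = T' := by
  obtain ⟨x, y, z, hxy, hyz, rfl⟩ := three_order hT
  obtain ⟨x', y', z', hxy', hyz', rfl⟩ := three_order hT'
  rw [Fab_explicit a hxy hyz, Fab_explicit a' hxy' hyz'] at h
  have hTT : ({x, y, z} : Finset (Fin s)) = {x', y', z'} := by
    have h2 := congrArg (Finset.image Prod.snd) h
    simpa [Finset.image_insert] using h2
  have hxx : x = x' := by
    have m1 := min_triple hxy hyz
    have m2 := min_triple hxy' hyz'
    rw [hTT, m2] at m1
    exact (WithTop.coe_inj.mp m1).symm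
  have hzz : z = z' := by
    have m1 := max_triple hxy hyz
    have m2 := max_triple hxy' hyz'
    rw [hTT, m2] at m1
    exact (WithBot.coe_inj.mp m1).symm
  subst hxx
  subst hzz
  have hyy : y = y' := by
    have hm : y ∈ ({x, y', z} : Finset (Fin s)) := by rw [← hTT]; simp
    simp at hm
    rcases hm with rfl | rfl | rfl
    · exact absurd hxy (lt_irrefl _)
    · rfl
    · exact absurd hyz (lt_irrefl _)
  subst hyy
  refine ⟨?_, rfl⟩
  have hmem : ((a, x) : Fin 2 × Fin s) ∈ ({(a', x), (a' + 1, y), (a', z)} : Finset (Fin 2 × Fin s)) := by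
    rw [← h]; simp
  simp only [Finset.mem_insert, Finset.mem_singleton, Prod.mk.injEq] at hmem
  rcases hmem with ⟨ha, _⟩ | ⟨_, hxy2⟩ | ⟨ha, hxz⟩
  · exact ha
  · exact absurd hxy2 hxy.ne
  · exact absurd hxz (hxy.trans hyz).ne


theorem stmt_4 (s : ℕ) (hs : 3 ≤ s) :
    3 * ({S : Finset (Fin 2 × Fin s) |
        isGPSet ((SimpleGraph.pathGraph 2).boxProd (SimpleGraph.pathGraph s)) ↑S ∧
        S.card = gpNum ((SimpleGraph.pathGraph 2).boxProd (SimpleGraph.pathGraph s))}.ncard)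
      = s * (s - 1) * (s - 2) := by
  classical
  have key : {S : Finset (Fin 2 × Fin s) |
      isGPSet ((SimpleGraph.pathGraph 2).boxProd (SimpleGraph.pathGraph s)) ↑S ∧
      S.card = gpNum ((SimpleGraph.pathGraph 2).boxProd (SimpleGraph.pathGraph s))} =
      ↑((Finset.univ ×ˢ Finset.univ.powersetCard 3).image
        (fun p : Fin 2 × Finset (Fin s) => Fab p.1 p.2)) := by
    ext S
    simp only [Set.mem_setOf_eq, Finset.coe_image, Set.mem_image, Finset.mem_coe,
      Finset.mem_product, Finset.mem_univ, true_and, Finset.mem_powersetCard_univ]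
    constructor
    · rintro ⟨hgp, hcard⟩
      rw [gpNum_eq hs] at hcard
      obtain ⟨u, v, w, h1, h3, h2, rfl⟩ := Finset.card_eq_three.mp hcard
      obtain ⟨d1, d2, d3⟩ := cols_ne hgp h1 h2 h3
      rcases lt_trichotomy u.2.val v.2.val with c1 | c1 | c1
      · rcases lt_trichotomy v.2.val w.2.val with c2 | c2 | c2
        · obtain ⟨p, hp, hf⟩ := build' rfl hgp h1 h2 h3 c1 c2
          exact ⟨p, hp, hf⟩
        · exact absurd c2 d2
        · rcases lt_trichotomy u.2.val w.2.val with c3 | c3 | c3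
          · obtain ⟨p, hp, hf⟩ := build' (by ext t; simp; tauto :
                ({u, v, w} : Finset (Fin 2 × Fin s)) = {u, w, v}) hgp h3 h2.symm h1 c3 c2
            exact ⟨p, hp, hf⟩
          · exact absurd c3 d3
          · obtain ⟨p, hp, hf⟩ := build' (by ext t; simp; tauto :
                ({u, v, w} : Finset (Fin 2 × Fin s)) = {w, u, v}) hgp h3.symm h1 h2.symm c3 c1
            exact ⟨p, hp, hf⟩
      · exact absurd c1 d1
      · rcases lt_trichotomy v.2.val w.2.val with c2 | c2 | c2
        · rcases lt_trichotomy u.2.val w.2.val with c3 | c3 | c3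
          · obtain ⟨p, hp, hf⟩ := build' (by ext t; simp; tauto :
                ({u, v, w} : Finset (Fin 2 × Fin s)) = {v, u, w}) hgp h1.symm h3 h2 c1 c3
            exact ⟨p, hp, hf⟩
          · exact absurd c3 d3
          · obtain ⟨p, hp, hf⟩ := build' (by ext t; simp; tauto :
                ({u, v, w} : Finset (Fin 2 × Fin s)) = {v, w, u}) hgp h2 h3.symm h1.symm c2 c3
            exact ⟨p, hp, hf⟩
        · exact absurd c2 d2
        · obtain ⟨p, hp, hf⟩ := build' (by ext t; simp; tauto :
              ({u, v, w} : Finset (Fin 2 × Fin s)) = {w, v, u}) hgp h2.symm h1.symm h3.symm c2 c1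
          exact ⟨p, hp, hf⟩
    · rintro ⟨⟨a, T⟩, hT, rfl⟩
      obtain ⟨x, y, z, hxy, hyz, rfl⟩ := three_order hT
      show isGPSet (GG s) _ ∧ _
      rw [Fab_explicit a hxy hyz]
      exact ⟨gp_explicit a x y z hxy hyz,
        by rw [card_explicit a x y z hxy hyz, gpNum_eq hs]⟩
  rw [key, Set.ncard_coe_finset]
  rw [Finset.card_image_of_injOn]
  · rw [Finset.card_product, Finset.card_univ, Fintype.card_fin,
      Finset.card_powersetCard, Finset.card_univ, Fintype.card_fin]
    have h6 : 6 * Nat.choose s 3 = s * (s - 1) * (s - 2) := by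
      have hd : Nat.descFactorial s 3 = s * (s - 1) * (s - 2) := by
        simp [Nat.descFactorial]
        ring
      rw [Nat.choose_eq_descFactorial_div_factorial, show Nat.factorial 3 = 6 from rfl, ← hd]
      exact Nat.mul_div_cancel' (show (6 : ℕ) ∣ _ from
        (show Nat.factorial 3 = 6 from rfl) ▸ Nat.factorial_dvd_descFactorial s 3)
    omega
  · intro p hp q hq hpq
    simp only [Finset.coe_product, Set.mem_prod, Finset.mem_coe, Finset.mem_univ,
      Finset.mem_powersetCard_univ, true_and] at hp hq
    obtain ⟨ha, hT⟩ := Fab_inj hp hq hpq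
    exact Prod.ext ha hT
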